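/- Let g be a real Lie algebra in which all abelian ideals are central. Then every nilpotent ideal n of g satisfies C³(n) = 0 (i.e. [n,[n,n]] = 0) and C²(n) = [n,n] is contained in the center z(g) of g. -/

import Mathlib

/-- Jacobi identity at the level of ideals. -/
lemma lie_lie_le_sup {R : Type*} {L : Type*} [CommRing R] [LieRing L] [LieAlgebra R L]
    (I J K : LieIdeal R L) :
    ⁅I, ⁅J, K⁆⁆ ≤ ⁅⁅I, J⁆, K⁆ ⊔ ⁅J, ⁅I, K⁆⁆ := by
  rw [LieSubmodule.lie_le_iff]
  intro x hx m hm
  rw [← LieSubmodule.mem_toSubmodule, LieSubmodule.lieIdeal_oper_eq_linear_span'] at hm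
  refine Submodule.span_induction ?_ ?_ ?_ ?_ hm
  · rintro m ⟨y, hy, z, hz, rfl⟩
    rw [leibniz_lie x y z]
    exact add_mem
      (le_sup_left (α := LieIdeal R L) (LieSubmodule.lie_mem_lie
        (LieSubmodule.lie_mem_lie hx hy) hz))
      (le_sup_right (α := LieIdeal R L) (LieSubmodule.lie_mem_lie hy
        (LieSubmodule.lie_mem_lie hx hz)))
  · simp
  · intro a b _ _ ha hb
    rw [lie_add]; exact add_mem ha hb
  · intro t a _ ha
    rw [lie_smul]; exact Submodule.smul_mem _ t ha

theorem nilpotent_ideal_of_abelian_ideals_central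
    {g : Type*} [LieRing g] [LieAlgebra ℝ g]
    (habelian : ∀ I : LieIdeal ℝ g, (∀ a ∈ I, ∀ b ∈ I, ⁅a, b⁆ = (0 : g)) →
      I ≤ LieAlgebra.center ℝ g)
    (n : LieIdeal ℝ g)
    (hnil : ∃ k : ℕ, (fun J : LieIdeal ℝ g => ⁅n, J⁆)^[k] n = ⊥) :
    ⁅n, ⁅n, n⁆⁆ = (⊥ : LieIdeal ℝ g) ∧ ⁅n, n⁆ ≤ LieAlgebra.center ℝ g := by
  set D : ℕ → LieIdeal ℝ g := fun k => (fun J : LieIdeal ℝ g => ⁅n, J⁆)^[k] n with hD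
  have hD0 : D 0 = n := rfl
  have hDsucc : ∀ k, D (k + 1) = ⁅n, D k⁆ := by
    intro k
    simp only [hD, Function.iterate_succ_apply']
  -- the series is antitone (one step):
  have hmono : ∀ j k, j ≤ k → D k ≤ D j := by
    intro j k hjk
    induction k with
    | zero => simpa [Nat.le_zero.mp hjk] using le_refl (D 0)
    | succ k ih =>
      rcases Nat.lt_or_ge j (k + 1) with h | h
      · exact le_trans (by rw [hDsucc]; exact LieSubmodule.lie_le_right _ _)
          (ih (Nat.lt_succ_iff.mp h))
      · have : j = k + 1 := le_antisymm hjk h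
        subst this; exact le_refl _
  -- products of terms of the series
  have hprod : ∀ j k, ⁅D j, D k⁆ ≤ D (j + k + 1) := by
    intro j
    induction j with
    | zero =>
      intro k
      rw [hD0, ← hDsucc]
      simpa using le_refl (D (k + 1))
    | succ j ih =>
      intro k
      rw [hDsucc j]
      calc ⁅⁅n, D j⁆, D k⁆ = ⁅D k, ⁅n, D j⁆⁆ := LieSubmodule.lie_comm _ _
        _ ≤ ⁅⁅D k, n⁆, D j⁆ ⊔ ⁅n, ⁅D k, D j⁆⁆ := lie_lie_le_sup _ _ _
        _ ≤ D (j + 1 + k + 1) := by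
            apply sup_le
            · rw [LieSubmodule.lie_comm (D k) n, ← hDsucc, LieSubmodule.lie_comm]
              exact le_trans (ih (k + 1)) (hmono _ _ (by omega))
            · rw [LieSubmodule.lie_comm (D k) (D j)]
              refine le_trans (LieSubmodule.mono_lie_right _ (ih k)) ?_
              rw [← hDsucc]
              exact hmono _ _ (by omega)
  -- bracket with central ideal is trivial
  have hcent : ∀ (I J : LieIdeal ℝ g), J ≤ LieAlgebra.center ℝ g → ⁅I, J⁆ = ⊥ := by
    intro I J hJ
    rw [LieSubmodule.lie_eq_bot_iff]
    intro x _ m hm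
    exact (LieModule.mem_maxTrivSubmodule ℝ g g m).mp (hJ hm) x
  -- downward induction step
  have hstep : ∀ k, 1 ≤ k → D (k + 1) ≤ LieAlgebra.center ℝ g →
      D k ≤ LieAlgebra.center ℝ g := by
    intro k hk hk1
    apply habelian
    have h1 : ⁅D k, D k⁆ ≤ D (k + k + 1) := hprod k k
    have h2 : D (k + k + 1) ≤ D (k + 2) := hmono _ _ (by omega)
    have h3 : D (k + 2) = ⊥ := by
      rw [show k + 2 = (k + 1) + 1 from rfl, hDsucc]
      exact hcent n (D (k + 1)) hk1
    have h4 : ⁅D k, D k⁆ = ⊥ := le_bot_iff.mp (h3 ▸ le_trans h1 h2)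
    intro a ha b hb
    exact (LieSubmodule.lie_eq_bot_iff _ _).mp h4 a ha b hb
  -- iterate the step downward
  have hdown : ∀ j, D (1 + j) ≤ LieAlgebra.center ℝ g → D 1 ≤ LieAlgebra.center ℝ g := by
    intro j
    induction j with
    | zero => exact fun h => h
    | succ j ih =>
      intro h
      exact ih (hstep (1 + j) (by omega) (by rwa [show 1 + j + 1 = 1 + (j + 1) from rfl]))
  obtain ⟨m, hm⟩ := hnil
  have hDm : D m = ⊥ := hm
  have hD1 : D 1 ≤ LieAlgebra.center ℝ g := by
    rcases Nat.eq_zero_or_pos m with rfl | hmpos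
    · -- n = ⊥
      have : D 1 = ⊥ := by
        rw [hDsucc, hD0]
        rw [hD0] at hDm
        rw [hDm]; simp
      rw [this]; exact bot_le
    · apply hdown (m - 1)
      rw [show 1 + (m - 1) = m by omega, hDm]
      exact bot_le
  have hD1eq : D 1 = ⁅n, n⁆ := by rw [hDsucc, hD0]
  constructor
  · have : ⁅n, D 1⁆ = ⊥ := hcent n (D 1) hD1
    rwa [hD1eq] at this
  · rwa [hD1eq] at hD1
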